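/- arXiv:2304.01079 — 4 statements merged into one kernel-verified Lean document; each statement's English description precedes it below -/
import Mathlib

section
/- Let G be a locally compact Hausdorff topological group with left Haar measure μ_G and modular function Δ, let H be an open subgroup of G with Haar measure μ_H given by restricting μ_G, and let (π, V) be a unitary representation of H. Fix p ∈ [1, ∞), elements t_i, t_j ∈ G, and vectors w, w' ∈ V. Define f : G → V by f(g) = π((t_i⁻¹ g)⁻¹) w if g ∈ t_i H, and f(g) = 0 otherwise. Then ∫_G |⟨f(g⁻¹ t_j), w'⟩|^p dμ_G(g) = Δ(t_i⁻¹) · ∫_H |⟨π(h) w, w'⟩|^p dμ_H(h) (an equality in [0, ∞], both sides finite or infinite together). -/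
open MeasureTheory
open scoped Classical

/-- Key computation in the proof of Proposition 1.2: for a unitary representation `π`
of an open subgroup `H` of `G`, the function `f` supported on the coset `t_i • H` with
`f g = π ((t_i⁻¹ g)⁻¹) w` there satisfies
`∫_G |⟨f (g⁻¹ t_j), w'⟩|^p dμ_G(g) = Δ(t_i⁻¹) • ∫_H |⟨π(h) w, w'⟩|^p dμ_H(h)`,
where `Δ` is the modular function of `G` and `μ_H` the restriction of `μ_G` to `H`. -/
theorem lintegral_matrix_coefficient_single_coset
    {G : Type*} [Group G] [TopologicalSpace G] [IsTopologicalGroup G]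
    [LocallyCompactSpace G] [T2Space G] [MeasurableSpace G] [BorelSpace G]
    (μ : Measure G) [μ.IsHaarMeasure]
    (H : Subgroup G) (hH : IsOpen (H : Set G))
    {V : Type*} [NormedAddCommGroup V] [InnerProductSpace ℂ V] [CompleteSpace V]
    (π : ↥H →* (V ≃ₗᵢ[ℂ] V))
    (hπcont : ∀ v : V, Continuous fun h : ↥H => π h v)
    (Δ : G → ENNReal)
    (hΔ : ∀ g : G, ∀ E : Set G, MeasurableSet E →
      μ ((fun x => x * g) '' E) = Δ g * μ E)
    (p : ℝ) (hp : 1 ≤ p)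
    (ti tj : G) (w w' : V)
    (f : G → V)
    (hf : f = fun g =>
      if hg : ti⁻¹ * g ∈ H then (π (⟨ti⁻¹ * g, hg⟩⁻¹)) w else 0) :
    ∫⁻ g, ((‖(inner ℂ (f (g⁻¹ * tj)) w' : ℂ)‖₊ : ENNReal)) ^ p ∂μ
      = Δ ti⁻¹ *
        ∫⁻ g in (H : Set G),
          (if hg : g ∈ H then ((‖(inner ℂ ((π ⟨g, hg⟩) w) w' : ℂ)‖₊ : ENNReal)) ^ p else 0) ∂μ := by
  classical
  set ψ : G → ENNReal := fun x =>
    if hg : x ∈ H then ((‖(inner ℂ ((π ⟨x, hg⟩) w) w' : ℂ)‖₊ : ENNReal)) ^ p else 0 with hψ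
  have hmap : μ.map (fun x : G => x * ti) = Δ ti⁻¹ • μ := by
    ext E hE
    rw [Measure.map_apply (measurable_mul_const ti) hE, Measure.smul_apply, smul_eq_mul,
      ← hΔ ti⁻¹ E hE]
    congr 1
    ext x
    constructor
    · intro hx
      exact ⟨x * ti, hx, by group⟩
    · rintro ⟨y, hy, rfl⟩
      simpa using hy
  -- Step 1: left invariance
  have step1 : ∫⁻ g, ((‖(inner ℂ (f (g⁻¹ * tj)) w' : ℂ)‖₊ : ENNReal)) ^ p ∂μ
      = ∫⁻ g, ((‖(inner ℂ (f g⁻¹) w' : ℂ)‖₊ : ENNReal)) ^ p ∂μ := by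
    have := lintegral_mul_left_eq_self (μ := μ)
      (fun x => ((‖(inner ℂ (f (x⁻¹ * tj)) w' : ℂ)‖₊ : ENNReal)) ^ p) tj
    rw [← this]
    refine lintegral_congr fun x => ?_
    have : (tj * x)⁻¹ * tj = x⁻¹ := by group
    rw [this]
  -- Step 2: pointwise identification
  have step2 : ∀ g : G, ((‖(inner ℂ (f g⁻¹) w' : ℂ)‖₊ : ENNReal)) ^ p = ψ (g * ti) := by
    intro g
    by_cases h : g * ti ∈ H
    · have h' : ti⁻¹ * g⁻¹ ∈ H := by
        have := H.inv_mem h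
        simpa [mul_inv_rev] using this
      have harg : (⟨ti⁻¹ * g⁻¹, h'⟩ : H)⁻¹ = ⟨g * ti, h⟩ := by
        ext
        simp [mul_inv_rev]
      simp only [hf, hψ, h', h, dif_pos, harg]
    · have h' : ¬ (ti⁻¹ * g⁻¹ ∈ H) := by
        intro hc
        have := H.inv_mem hc
        simp only [mul_inv_rev, inv_inv] at this
        exact h this
      simp only [hf, hψ, h', h, dif_neg, not_false_iff]
      simp only [inner_zero_left, norm_zero, nnnorm_zero, ENNReal.coe_zero]
      exact ENNReal.zero_rpow_of_pos (by linarith)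
  -- Step 3: change of variables by right translation
  have step3 : ∫⁻ g, ψ (g * ti) ∂μ = Δ ti⁻¹ * ∫⁻ x, ψ x ∂μ := by
    rw [show (fun g : G => g * ti) = (MeasurableEquiv.mulRight ti : G → G) from rfl] at hmap
    calc ∫⁻ g, ψ (g * ti) ∂μ
        = ∫⁻ a, ψ ((MeasurableEquiv.mulRight ti) a) ∂μ := rfl
      _ = ∫⁻ a, ψ a ∂(μ.map (MeasurableEquiv.mulRight ti)) :=
          (lintegral_map_equiv (μ := μ) ψ (MeasurableEquiv.mulRight ti)).symm
      _ = Δ ti⁻¹ * ∫⁻ x, ψ x ∂μ := by rw [hmap, lintegral_smul_measure, smul_eq_mul]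
  -- Step 4: restrict to H
  have step4 : ∫⁻ x, ψ x ∂μ = ∫⁻ x in (H : Set G), ψ x ∂μ := by
    rw [← lintegral_indicator hH.measurableSet ψ]
    refine lintegral_congr fun x => ?_
    by_cases hx : x ∈ H
    · simp [Set.indicator_of_mem, hx]
    · simp [Set.indicator_of_notMem, hx, hψ]
  rw [step1, lintegral_congr step2, step3, step4]
end

section
/- Let G be a topological group, H an open subgroup of G, T ⊆ G a set of representatives of the left cosets of H, and (π, V) a unitary representation of H. Let f : G → V satisfy the equivariance condition f(gh) = π(h⁻¹) f(g) for all g ∈ G and h ∈ H, and suppose ∑_{t ∈ T} ‖f(t)‖² < ∞. Then for every g ∈ G, ∑_{t ∈ T} ‖f(g⁻¹ t)‖² = ∑_{t ∈ T} ‖f(t)‖². In particular, the left translation action (g · f)(g') = f(g⁻¹ g') preserves the norm ( ∑_{t ∈ T} ‖f(t)‖² )^{1/2} on equivariant square-summable functions, i.e., the induced representation acts unitarily. -/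
open MeasureTheory

/-- Left translation preserves the norm of equivariant square-summable functions:
if `f : G → V` is equivariant for a unitary representation `π` of an open subgroup `H`
and `∑_{t ∈ T} ‖f t‖² < ∞` over a set `T` of left coset representatives, then for every
`g ∈ G` we have `∑_{t ∈ T} ‖f (g⁻¹ t)‖² = ∑_{t ∈ T} ‖f t‖²`; i.e. the induced
representation acts unitarily. -/
theorem induced_representation_unitary
    {G : Type*} [Group G] [TopologicalSpace G] [IsTopologicalGroup G]
    (H : Subgroup G) (hH : IsOpen (H : Set G))
    (T : Set G) (hT : ∀ g : G, ∃! t : G, t ∈ T ∧ t⁻¹ * g ∈ H)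
    {V : Type*} [NormedAddCommGroup V] [InnerProductSpace ℂ V] [CompleteSpace V]
    (π : ↥H →* (V ≃ₗᵢ[ℂ] V))
    (hπcont : ∀ v : V, Continuous fun h : ↥H => π h v)
    (f : G → V)
    (hfequiv : ∀ g : G, ∀ h : ↥H, f (g * h) = π h⁻¹ (f g))
    (hfsum : ∑' t : T, ((‖f t‖₊ : ENNReal)) ^ 2 < ⊤) :
    ∀ g : G, ∑' t : T, ((‖f (g⁻¹ * t)‖₊ : ENNReal)) ^ 2
      = ∑' t : T, ((‖f t‖₊ : ENNReal)) ^ 2 := by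
  intro g
  choose r hr using hT
  have hrT : ∀ x : G, r x ∈ T := fun x => (hr x).1.1
  have hrH : ∀ x : G, (r x)⁻¹ * x ∈ H := fun x => (hr x).1.2
  have hru : ∀ x y : G, y ∈ T → y⁻¹ * x ∈ H → y = r x := fun x y h1 h2 =>
    (hr x).2 y ⟨h1, h2⟩
  -- the permutation of T induced by left translation by g⁻¹
  have lemma_inv : ∀ (a : G) (t : T), r (a * r (a⁻¹ * t)) = (t : G) := by
    intro a t
    refine (hru _ _ t.2 ?_).symm
    have := H.inv_mem (hrH (a⁻¹ * t))
    simpa [mul_assoc] using this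
  let e : T ≃ T :=
    { toFun := fun t => ⟨r (g⁻¹ * t), hrT _⟩
      invFun := fun t => ⟨r (g * t), hrT _⟩
      left_inv := fun t => by
        ext
        simpa using lemma_inv g t
      right_inv := fun t => by
        ext
        simpa using lemma_inv g⁻¹ t }
  have hnorm : ∀ t : T, ‖f (g⁻¹ * t)‖₊ = ‖f (e t)‖₊ := by
    intro t
    have hmem : (r (g⁻¹ * t))⁻¹ * (g⁻¹ * t) ∈ H := hrH _
    have : f (g⁻¹ * (t : G)) = π (⟨_, hmem⟩ : H)⁻¹ (f (r (g⁻¹ * t))) := by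
      rw [← hfequiv (r (g⁻¹ * t)) ⟨_, hmem⟩]
      congr 1
      simp [mul_assoc]
    rw [this]
    simp [e]
  calc ∑' t : T, ((‖f (g⁻¹ * t)‖₊ : ENNReal)) ^ 2
      = ∑' t : T, ((‖f (e t)‖₊ : ENNReal)) ^ 2 := by
        congr 1; funext t; rw [hnorm]
    _ = ∑' t : T, ((‖f t‖₊ : ENNReal)) ^ 2 := e.tsum_eq (fun t : T => ((‖f (t : G)‖₊ : ENNReal)) ^ 2)
end

section
/- Let G be a locally compact Hausdorff topological group with left Haar measure μ_G, let H be an open subgroup of G with Haar measure μ_H given by restricting μ_G, let T ⊆ G be a set of representatives of the left cosets of H, and let (π, V) be a unitary representation of H. Fix p ∈ [1, ∞). Let f, f' : G → V satisfy the equivariance condition f(gh) = π(h⁻¹) f(g) (and likewise for f') for all g ∈ G, h ∈ H, and suppose that f(t) ≠ 0 and f'(t) ≠ 0 for only finitely many t ∈ T. Assume that for all t, t' ∈ T, the matrix coefficient h ↦ ⟨π(h) f(t), f'(t')⟩ lies in L^p(H, μ_H). Then the matrix coefficient of the induced representation, namely the function g ↦ ∑_{t ∈ T} ⟨f(g⁻¹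 t), f'(t)⟩, lies in L^p(G, μ_G). (This is Proposition 1.2: a representation induced from an L^p-representation of an open subgroup is an L^p-representation, stated at the level of matrix coefficients on the dense subspace of finitely supported equivariant functions.) -/
open MeasureTheory
open scoped Classical ENNReal Pointwise

open Set

/-- Every locally compact topological group has an open σ-compact subgroup. -/
lemma exists_open_sigmaCompact_subgroup (G : Type*) [Group G] [TopologicalSpace G]
    [IsTopologicalGroup G] [LocallyCompactSpace G] :
    ∃ Γ : Subgroup G, IsOpen (Γ : Set G) ∧ IsSigmaCompact (Γ : Set G) := by
  obtain ⟨k, k_comp, k_mem⟩ := exists_compact_mem_nhds (1 : G)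
  set S : Set G := k ∪ k⁻¹ with hS
  have hSsymm : S⁻¹ = S := by simp [hS, Set.union_comm]
  have hSpow_symm : ∀ n : ℕ, (S ^ n)⁻¹ = S ^ n := by
    intro n; rw [← inv_pow, hSsymm]
  let Γ : Subgroup G :=
  { carrier := ⋃ n, S ^ n
    one_mem' := mem_iUnion.2 ⟨0, by simp⟩
    mul_mem' := by
      intro a b ha hb
      obtain ⟨m, hm⟩ := mem_iUnion.1 ha
      obtain ⟨n, hn⟩ := mem_iUnion.1 hb
      exact mem_iUnion.2 ⟨m + n, by rw [pow_add]; exact Set.mul_mem_mul hm hn⟩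
    inv_mem' := by
      intro a ha
      obtain ⟨n, hn⟩ := mem_iUnion.1 ha
      refine mem_iUnion.2 ⟨n, ?_⟩
      rw [← hSpow_symm n]
      exact Set.inv_mem_inv.2 hn }
  have hpow_comp : ∀ n : ℕ, IsCompact (S ^ n) := by
    intro n
    induction n with
    | zero =>
      rw [pow_zero]
      exact isCompact_singleton
    | succ n ih => rw [pow_succ]; exact ih.mul (k_comp.union k_comp.inv)
  refine ⟨Γ, ?_, ?_⟩
  · apply Subgroup.isOpen_of_mem_nhds
    refine Filter.mem_of_superset k_mem ?_
    intro x hx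
    exact mem_iUnion.2 ⟨1, by simpa [pow_one, hS] using Or.inl hx⟩
  · exact isSigmaCompact_iUnion_of_isCompact _ hpow_comp

/-- In a locally compact group with a Haar measure, every open set of finite measure
is contained in a σ-compact set. -/
lemma exists_sigmaCompact_superset_of_isOpen {G : Type*} [Group G] [TopologicalSpace G]
    [IsTopologicalGroup G] [LocallyCompactSpace G] [MeasurableSpace G] [BorelSpace G]
    (μ : Measure G) [μ.IsHaarMeasure] {U : Set G} (hU : IsOpen U) (hμU : μ U ≠ ∞) :
    ∃ V : Set G, IsSigmaCompact V ∧ U ⊆ V := by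
  obtain ⟨Γ, hΓopen, hΓσ⟩ := exists_open_sigmaCompact_subgroup G
  set q : G → G ⧸ Γ := QuotientGroup.mk with hq
  have hfiber : ∀ g : G, q ⁻¹' {q g} = (fun x => g * x) '' (Γ : Set G) := by
    intro g
    ext x
    simp only [Set.mem_preimage, Set.mem_singleton_iff, Set.image_mul_left]
    constructor
    · intro h
      have : g⁻¹ * x ∈ Γ := QuotientGroup.eq.1 h.symm
      simpa using this
    · intro h
      exact (QuotientGroup.eq.2 (by simpa using h)).symm
  have hfiber_open : ∀ c : G ⧸ Γ, IsOpen (q ⁻¹' {c}) := by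
    intro c
    obtain ⟨g, rfl⟩ := QuotientGroup.mk_surjective c
    rw [hfiber g]
    exact (Homeomorph.mulLeft g).isOpenMap _ hΓopen
  have hfiber_sigma : ∀ c : G ⧸ Γ, IsSigmaCompact (q ⁻¹' {c}) := by
    intro c
    obtain ⟨g, rfl⟩ := QuotientGroup.mk_surjective c
    rw [hfiber g]
    exact hΓσ.image (continuous_mul_left g)
  set A : G ⧸ Γ → Set G := fun c => U ∩ q ⁻¹' {c} with hA
  have hAmeas : ∀ c, MeasurableSet (A c) :=
    fun c => (hU.inter (hfiber_open c)).measurableSet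
  have hAdisj : Pairwise (Function.onFun Disjoint A) := by
    intro c c' hcc'
    refine Set.disjoint_left.2 ?_
    rintro x ⟨-, hx⟩ ⟨-, hx'⟩
    exact hcc' (by rw [← hx, ← hx'])
  have hAunion : μ (⋃ c, A c) ≠ ∞ := by
    refine ne_top_of_le_ne_top hμU (measure_mono ?_)
    exact Set.iUnion_subset fun c => Set.inter_subset_left
  have hcount : Set.Countable {c : G ⧸ Γ | 0 < μ (A c)} :=
    MeasureTheory.Measure.countable_meas_pos_of_disjoint_of_meas_iUnion_ne_top μ
      hAmeas hAdisj hAunion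
  refine ⟨⋃ c ∈ {c : G ⧸ Γ | 0 < μ (A c)}, q ⁻¹' {c}, ?_, ?_⟩
  · exact isSigmaCompact_biUnion hcount fun c _ => hfiber_sigma c
  · intro x hx
    have hpos : 0 < μ (A (q x)) := by
      apply (hU.inter (hfiber_open (q x))).measure_pos μ
      exact ⟨x, hx, rfl⟩
    exact Set.mem_biUnion hpos rfl

/-- Two Haar measures on a locally compact group agree, up to the Haar scalar factor,
on σ-compact sets (and hence as measures restricted to a σ-compact set), without any
regularity assumptions. -/
lemma restrict_haar_eq_smul_restrict {G : Type*} [Group G] [TopologicalSpace G]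
    [IsTopologicalGroup G] [T2Space G] [LocallyCompactSpace G]
    [MeasurableSpace G] [BorelSpace G]
    (ν μ : Measure G) [μ.IsHaarMeasure] [ν.IsHaarMeasure] {V : Set G}
    (hV : IsSigmaCompact V) :
    ν.restrict V = (Measure.haarScalarFactor ν μ : ℝ≥0∞) • μ.restrict V := by
  obtain ⟨K, K_comp, hKV⟩ := hV
  have L_comp : ∀ n, IsCompact (Set.accumulate K n) := by
    intro n
    rw [Set.accumulate_def]
    exact (Set.finite_Iic n).isCompact_biUnion fun i _ => K_comp i
  ext s hs
  rw [Measure.smul_apply, Measure.restrict_apply hs, Measure.restrict_apply hs, smul_eq_mul]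
  have key : ∀ n, ν (s ∩ V ∩ Set.accumulate K n)
      = (Measure.haarScalarFactor ν μ : ℝ≥0∞) * μ (s ∩ V ∩ Set.accumulate K n) := by
    intro n
    have hclos : IsCompact (closure (s ∩ V ∩ Set.accumulate K n)) :=
      (L_comp n).closure_of_subset Set.inter_subset_right
    simpa [ENNReal.smul_def] using
      Measure.measure_isMulInvariant_eq_smul_of_isCompact_closure ν μ hclos
  have hmono : Monotone (fun n => s ∩ V ∩ Set.accumulate K n) :=
    fun m n hmn => Set.inter_subset_inter_right _ (Set.monotone_accumulate hmn)
  have hcover : ⋃ n, (s ∩ V ∩ Set.accumulate K n) = s ∩ V := by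
    rw [← Set.inter_iUnion, Set.iUnion_accumulate, hKV]
    exact Set.inter_eq_self_of_subset_left Set.inter_subset_right
  calc ν (s ∩ V) = ⨆ n, ν (s ∩ V ∩ Set.accumulate K n) := by
        conv_lhs => rw [← hcover]
        exact hmono.directed_le.measure_iUnion
    _ = ⨆ n, (Measure.haarScalarFactor ν μ : ℝ≥0∞) * μ (s ∩ V ∩ Set.accumulate K n) := by
        simp_rw [key]
    _ = (Measure.haarScalarFactor ν μ : ℝ≥0∞) * ⨆ n, μ (s ∩ V ∩ Set.accumulate K n) :=
        (ENNReal.mul_iSup _ _).symm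
    _ = (Measure.haarScalarFactor ν μ : ℝ≥0∞) * μ (s ∩ V) := by
        congr 1
        conv_rhs => rw [← hcover]
        exact hmono.directed_le.measure_iUnion.symm

/-- A function vanishing outside an open set on which it is continuous, which is in `L^p`
for one Haar measure, is in `L^p` for every Haar measure (no regularity assumed). -/
lemma memℒp_of_isHaarMeasure_of_memℒp {G : Type*} [Group G] [TopologicalSpace G]
    [IsTopologicalGroup G] [T2Space G] [LocallyCompactSpace G]
    [MeasurableSpace G] [BorelSpace G]
    (μ ν : Measure G) [μ.IsHaarMeasure] [ν.IsHaarMeasure]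
    {H : Set G} (hH : IsOpen H) {C : G → ℂ} (hC0 : ∀ g ∉ H, C g = 0)
    (hCcont : ContinuousOn C H) {p : ℝ} (hp : 1 ≤ p)
    (hC : MemLp C (ENNReal.ofReal p) μ) : MemLp C (ENNReal.ofReal p) ν := by
  have hp0 : 0 < p := lt_of_lt_of_le one_pos hp
  have hq0 : (ENNReal.ofReal p) ≠ 0 := (ENNReal.ofReal_pos.2 hp0).ne'
  have hqt : (ENNReal.ofReal p) ≠ ∞ := ENNReal.ofReal_ne_top
  have hqr : (ENNReal.ofReal p).toReal = p := ENNReal.toReal_ofReal hp0.le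
  have hsupp : Function.support C ⊆ H := by
    intro g hg
    by_contra h
    exact hg (hC0 g h)
  have hmeas : ∀ m : Measure G, AEStronglyMeasurable C m := by
    intro m
    rw [← Set.indicator_eq_self.2 hsupp, aestronglyMeasurable_indicator_iff hH.measurableSet]
    exact (hCcont.aemeasurable hH.measurableSet).aestronglyMeasurable
  set D : G → ℝ≥0∞ := fun g => (‖C g‖₊ : ℝ≥0∞) ^ p with hD
  have Ifin : ∫⁻ g, D g ∂μ < ∞ := by
    have h2 := hC.2
    rw [eLpNorm_eq_lintegral_rpow_enorm_toReal hq0 hqt, hqr] at h2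
    exact (ENNReal.rpow_lt_top_iff_of_pos (by positivity)).1 h2
  set U : ℕ → Set G := fun n => H ∩ (fun g => ‖C g‖) ⁻¹' Set.Ioi (1 / ((n : ℝ) + 1)) with hU
  have hUopen : ∀ n, IsOpen (U n) :=
    fun n => hCcont.norm.isOpen_inter_preimage hH isOpen_Ioi
  have hUfin : ∀ n, μ (U n) ≠ ∞ := by
    intro n
    have hε : (0 : ℝ) < 1 / ((n : ℝ) + 1) := by positivity
    set b : ℝ≥0∞ := ENNReal.ofReal (1 / ((n : ℝ) + 1)) ^ p with hb
    have hbpos : 0 < b := ENNReal.rpow_pos (ENNReal.ofReal_pos.2 hε) ENNReal.ofReal_ne_top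
    have hble : ∀ g ∈ U n, b ≤ D g := by
      intro g hg
      have : ENNReal.ofReal (1 / ((n : ℝ) + 1)) ≤ (‖C g‖₊ : ℝ≥0∞) := by
        rw [← enorm_eq_nnnorm, ← ofReal_norm]
        exact ENNReal.ofReal_le_ofReal (le_of_lt hg.2)
      exact ENNReal.rpow_le_rpow this hp0.le
    have hkey : b * μ (U n) ≤ ∫⁻ g, D g ∂μ := by
      rw [← lintegral_indicator_const (hUopen n).measurableSet b]
      refine lintegral_mono fun g => ?_
      by_cases hg : g ∈ U n
      · simpa [Set.indicator_of_mem hg] using hble g hg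
      · simp [Set.indicator_of_notMem hg]
    intro htop
    rw [htop, ENNReal.mul_top hbpos.ne'] at hkey
    exact Ifin.not_ge (le_of_eq (top_le_iff.1 hkey).symm)
  have hex : ∀ n, ∃ V : Set G, IsSigmaCompact V ∧ U n ⊆ V :=
    fun n => exists_sigmaCompact_superset_of_isOpen μ (hUopen n) (hUfin n)
  choose W hWσ hUW using hex
  set V : Set G := ⋃ n, W n with hV
  have hVσ : IsSigmaCompact V := isSigmaCompact_iUnion _ hWσ
  have hVmeas : MeasurableSet V := by
    refine MeasurableSet.iUnion fun n => ?_
    obtain ⟨K, hK, hKW⟩ := hWσ n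
    rw [← hKW]
    exact MeasurableSet.iUnion fun m => (hK m).isClosed.measurableSet
  have hDV : ∀ g, g ∉ V → D g = 0 := by
    intro g hg
    by_cases hCg : C g = 0
    · simp [hD, hCg, ENNReal.zero_rpow_of_pos hp0]
    · exfalso
      have hgH : g ∈ H := by
        by_contra h
        exact hCg (hC0 g h)
      obtain ⟨n, hn⟩ := exists_nat_one_div_lt (norm_pos_iff.2 hCg)
      exact hg (Set.mem_iUnion.2 ⟨n, hUW n ⟨hgH, hn⟩⟩)
  have hνD : ∫⁻ g, D g ∂ν < ∞ := by
    have h1 : ∫⁻ g, D g ∂ν = ∫⁻ g, V.indicator D g ∂ν := by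
      refine lintegral_congr fun g => ?_
      by_cases hg : g ∈ V
      · simp [Set.indicator_of_mem hg]
      · simp [Set.indicator_of_notMem hg, hDV g hg]
    rw [h1, lintegral_indicator hVmeas,
      restrict_haar_eq_smul_restrict ν μ hVσ, lintegral_smul_measure]
    refine ENNReal.mul_lt_top ENNReal.coe_lt_top ?_
    exact lt_of_le_of_lt (lintegral_mono' Measure.restrict_le_self le_rfl) Ifin
  refine ⟨hmeas ν, ?_⟩
  rw [eLpNorm_eq_lintegral_rpow_enorm_toReal hq0 hqt, hqr]
  exact ENNReal.rpow_lt_top_of_nonneg (by positivity) hνD.ne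

/-- Proposition 1.2, at the level of matrix coefficients: if `H` is an open subgroup of
a locally compact group `G`, `π` a unitary representation of `H`, and `f, f'` are
equivariant functions supported on finitely many cosets whose "component" matrix
coefficients `h ↦ ⟨π(h) f(t), f'(t')⟩` lie in `L^p(H)`, then the matrix coefficient of
the induced representation, `g ↦ ∑_{t ∈ T} ⟨f(g⁻¹ t), f'(t)⟩`, lies in `L^p(G)`. -/
theorem induced_representation_Lp
    {G : Type*} [Group G] [TopologicalSpace G] [IsTopologicalGroup G]
    [LocallyCompactSpace G] [T2Space G] [MeasurableSpace G] [BorelSpace G]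
    (μ : Measure G) [μ.IsHaarMeasure]
    (H : Subgroup G) (hH : IsOpen (H : Set G))
    (T : Set G) (hT : ∀ g : G, ∃! t : G, t ∈ T ∧ t⁻¹ * g ∈ H)
    {V : Type*} [NormedAddCommGroup V] [InnerProductSpace ℂ V] [CompleteSpace V]
    (π : ↥H →* (V ≃ₗᵢ[ℂ] V))
    (hπcont : ∀ v : V, Continuous fun h : ↥H => π h v)
    (p : ℝ) (hp : 1 ≤ p)
    (f f' : G → V)
    (hfequiv : ∀ g : G, ∀ h : ↥H, f (g * h) = π h⁻¹ (f g))
    (hf'equiv : ∀ g : G, ∀ h : ↥H, f' (g * h) = π h⁻¹ (f' g))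
    (hfsupp : {t : T | f t ≠ 0}.Finite)
    (hf'supp : {t : T | f' t ≠ 0}.Finite)
    (hLp : ∀ t ∈ T, ∀ t' ∈ T,
      MemLp (fun g : G => if hg : g ∈ H then (inner ℂ ((π ⟨g, hg⟩) (f t)) (f' t') : ℂ) else 0)
        (ENNReal.ofReal p) (μ.restrict (H : Set G))) :
    MemLp (fun g : G => ∑' t : T, (inner ℂ (f (g⁻¹ * t)) (f' t) : ℂ))
      (ENNReal.ofReal p) μ := by
  have hstep1 : (fun g : G => ∑' t : T, (inner ℂ (f (g⁻¹ * t)) (f' t) : ℂ))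
      = fun g : G => ∑ t ∈ hf'supp.toFinset, (inner ℂ (f (g⁻¹ * t)) (f' t) : ℂ) := by
    funext g
    refine tsum_eq_sum ?_
    intro t ht
    have h0 : f' t = 0 := by
      by_contra h
      exact ht (hf'supp.mem_toFinset.2 h)
    rw [h0, inner_zero_right]
  rw [hstep1]
  refine memLp_finsetSum _ fun t' _ => ?_
  set t'g : G := (t' : G) with ht'g
  have ht'T : t'g ∈ T := t'.2
  -- componentwise matrix coefficients
  set Cf : G → G → ℂ := fun t x =>
    if hx : x ∈ H then (inner ℂ ((π ⟨x, hx⟩) (f t)) (f' t'g) : ℂ) else 0 with hCf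
  have key : ∀ g : G, (inner ℂ (f (g⁻¹ * t'g)) (f' t'g) : ℂ)
      = ∑ t ∈ hfsupp.toFinset, Cf (↑t) (t'g⁻¹ * g * ↑t) := by
    intro g
    simp only [hCf]
    obtain ⟨t0, ⟨ht0T, ht0H⟩, ht0uniq⟩ := hT (g⁻¹ * t'g)
    have huniq : ∀ s : G, s ∈ T → t'g⁻¹ * g * s ∈ H → s = t0 := by
      intro s hsT hsH
      refine ht0uniq s ⟨hsT, ?_⟩
      have h1 := H.inv_mem hsH
      have h2 : (t'g⁻¹ * g * s)⁻¹ = s⁻¹ * (g⁻¹ * t'g) := by group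
      rwa [h2] at h1
    have hmem0 : t'g⁻¹ * g * t0 ∈ H := by
      have h1 := H.inv_mem ht0H
      have h2 : (t0⁻¹ * (g⁻¹ * t'g))⁻¹ = t'g⁻¹ * g * t0 := by group
      rwa [h2] at h1
    have hval : f (g⁻¹ * t'g) = (π ⟨t'g⁻¹ * g * t0, hmem0⟩) (f t0) := by
      have h1 : g⁻¹ * t'g = t0 * ((⟨t0⁻¹ * (g⁻¹ * t'g), ht0H⟩ : ↥H) : G) := by
        show g⁻¹ * t'g = t0 * (t0⁻¹ * (g⁻¹ * t'g))
        group
      rw [h1, hfequiv t0 _]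
      have h3 : (⟨t0⁻¹ * (g⁻¹ * t'g), ht0H⟩ : ↥H)⁻¹ = ⟨t'g⁻¹ * g * t0, hmem0⟩ := by
        ext
        show (t0⁻¹ * (g⁻¹ * t'g))⁻¹ = t'g⁻¹ * g * t0
        group
      rw [h3]
    by_cases hft0 : f t0 = 0
    · have hLHS : (inner ℂ (f (g⁻¹ * t'g)) (f' t'g) : ℂ) = 0 := by
        rw [hval, hft0, map_zero, inner_zero_left]
      rw [hLHS]
      refine (Finset.sum_eq_zero ?_).symm
      intro t htmem
      by_cases hH' : t'g⁻¹ * g * (t : G) ∈ H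
      · exfalso
        have hct : (t : G) = t0 := huniq (t : G) t.2 hH'
        exact (hfsupp.mem_toFinset.1 htmem) (by rw [hct, hft0])
      · exact dif_neg hH'
    · have ht0mem : (⟨t0, ht0T⟩ : T) ∈ hfsupp.toFinset := hfsupp.mem_toFinset.2 hft0
      rw [Finset.sum_eq_single_of_mem (⟨t0, ht0T⟩ : T) ht0mem ?_]
      · rw [hval]
        show (inner ℂ ((π ⟨t'g⁻¹ * g * t0, hmem0⟩) (f t0)) (f' t'g) : ℂ)
          = if hx : t'g⁻¹ * g * t0 ∈ H then
              (inner ℂ ((π ⟨t'g⁻¹ * g * t0, hx⟩) (f t0)) (f' t'g) : ℂ) else 0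
        rw [dif_pos hmem0]
      · intro t htmem hne
        by_cases hH' : t'g⁻¹ * g * (t : G) ∈ H
        · exact absurd (Subtype.ext (huniq (t : G) t.2 hH')) hne
        · exact dif_neg hH'
  have hfun : (fun g : G => (inner ℂ (f (g⁻¹ * t'g)) (f' t'g) : ℂ))
      = fun g : G => ∑ t ∈ hfsupp.toFinset, Cf (↑t) (t'g⁻¹ * g * ↑t) := funext key
  show MemLp (fun g : G => (inner ℂ (f (g⁻¹ * t'g)) (f' t'g) : ℂ)) (ENNReal.ofReal p) μ
  rw [hfun]
  refine memLp_finsetSum _ fun t _ => ?_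
  set tg : G := (t : G) with htg
  have htT : tg ∈ T := t.2
  set C : G → ℂ := fun x =>
    if hx : x ∈ H then (inner ℂ ((π ⟨x, hx⟩) (f tg)) (f' t'g) : ℂ) else 0 with hC
  have hC0 : ∀ x ∉ (H : Set G), C x = 0 := fun x hx => dif_neg hx
  have hCsupp : Function.support C ⊆ (H : Set G) := by
    intro x hx
    by_contra h
    exact hx (hC0 x h)
  have hCcont : ContinuousOn C (H : Set G) := by
    rw [continuousOn_iff_continuous_restrict]
    have hres : (H : Set G).domRestrict C
        = fun x : (H : Set G) => (inner ℂ ((π ⟨x.1, x.2⟩) (f tg)) (f' t'g) : ℂ) :=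
      funext fun x => dif_pos x.2
    rw [hres]
    refine Continuous.inner ?_ continuous_const
    have hsub : Continuous fun x : (H : Set G) => (⟨x.1, x.2⟩ : ↥H) :=
      Continuous.subtype_mk continuous_subtype_val _
    exact (hπcont (f tg)).comp hsub
  have hCmemμ : MemLp C (ENNReal.ofReal p) μ := by
    rw [← Set.indicator_eq_self.2 hCsupp]
    exact (memLp_indicator_iff_restrict hH.measurableSet).2 (hLp tg htT t'g ht'T)
  -- transfer along right translation by tg
  have hemb : MeasurableEmbedding (fun x : G => x * tg) :=
    (Homeomorph.mulRight tg).measurableEmbedding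
  haveI : (Measure.map (fun x : G => x * tg) μ).IsHaarMeasure :=
    Measure.isHaarMeasure_map_mul_right μ tg
  have hCν : MemLp C (ENNReal.ofReal p) (Measure.map (fun x : G => x * tg) μ) :=
    memℒp_of_isHaarMeasure_of_memℒp μ _ hH hC0 hCcont hp hCmemμ
  have hright : MemLp (C ∘ fun x : G => x * tg) (ENNReal.ofReal p) μ :=
    hemb.memLp_map_measure_iff.1 hCν
  have hfinal : MemLp ((C ∘ fun x : G => x * tg) ∘ fun g : G => t'g⁻¹ * g)
      (ENNReal.ofReal p) μ :=
    hright.comp_measurePreserving (measurePreserving_mul_left μ t'g⁻¹)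
  exact hfinal
end

section
/- Let G be a locally compact Hausdorff topological group with left Haar measure μ_G, let H be an open subgroup of G with Haar measure μ_H given by restricting μ_G, let T ⊆ G be a set of representatives of the left cosets of H, and let (π, V) be a unitary representation of H. Fix p ∈ [1, ∞). Let f, f' : G → V be equivariant (f(gh) = π(h⁻¹) f(g) for all g ∈ G, h ∈ H, and likewise for f'), with f(t) ≠ 0 and f'(t) ≠ 0 for only finitely many t ∈ T. Assume that for all t, t' ∈ T and every ε > 0, the matrix coefficient h ↦ ⟨π(h) f(t), f'(t')⟩ lies in L^{p+ε}(H, μ_H). Then for every ε > 0, the function g ↦ ∑_{t ∈ T} ⟨f(g⁻¹ t), f'(t)⟩ lies in L^{p+ε}(G, μ_G). (This is the L^{p+} case of Proposition 1.2: inducing an L^{p+}-representation from an open subgroup yields an L^{p+}-representation.) -/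
open MeasureTheory
open scoped Classical ENNReal

lemma aux_lintegral_haar_cmp
    {G : Type*} [Group G] [TopologicalSpace G] [IsTopologicalGroup G]
    [LocallyCompactSpace G] [MeasurableSpace G] [BorelSpace G]
    (μ' μ : Measure G) [μ.IsHaarMeasure] [μ'.IsHaarMeasure]
    (φ : G → ℝ) (hφ : Measurable φ) (hφ0 : ∀ x, 0 ≤ φ x)
    (hopen : ∀ t : ℝ, 0 < t → IsOpen {x | t < φ x}) :
    ∫⁻ x, ENNReal.ofReal (φ x) ∂μ'
      = (Measure.haarScalarFactor μ' μ : ℝ≥0∞) * ∫⁻ x, ENNReal.ofReal (φ x) ∂μ := by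
  rw [lintegral_eq_lintegral_meas_lt μ' (Filter.Eventually.of_forall hφ0) hφ.aemeasurable,
    lintegral_eq_lintegral_meas_lt μ (Filter.Eventually.of_forall hφ0) hφ.aemeasurable,
    ← lintegral_const_mul' _ _ ENNReal.coe_ne_top]
  refine setLIntegral_congr_fun measurableSet_Ioi ?_
  intro t ht
  beta_reduce
  rw [Measure.measure_isHaarMeasure_eq_smul_of_isOpen μ' μ (hopen t ht)]
  simp [ENNReal.smul_def]

-- the right-translate of a Haar measure is a Haar measure
lemma aux_isHaarMeasure_map_mul_right
    {G : Type*} [Group G] [TopologicalSpace G] [IsTopologicalGroup G]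
    [LocallyCompactSpace G] [T2Space G] [MeasurableSpace G] [BorelSpace G]
    (μ : Measure G) [μ.IsHaarMeasure] (b : G) :
    (μ.map (fun x => x * b)).IsHaarMeasure := by
  have hmb : Measurable (fun x : G => x * b) := measurable_mul_const b
  have hleft : (μ.map (fun x => x * b)).IsMulLeftInvariant := by
    refine ⟨fun a => ?_⟩
    rw [Measure.map_map (measurable_const_mul a) hmb]
    have h1 : ((fun x : G => a * x) ∘ (fun x => x * b))
        = (fun x : G => x * b) ∘ (fun x => a * x) := by
      funext x; simp [Function.comp, mul_assoc]
    rw [h1, ← Measure.map_map hmb (measurable_const_mul a),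
      MeasureTheory.map_mul_left_eq_self μ a]
  have hcpt : IsFiniteMeasureOnCompacts (μ.map (fun x => x * b)) := by
    refine ⟨fun K hK => ?_⟩
    rw [Measure.map_apply hmb hK.measurableSet]
    have h2 : (fun x : G => x * b) ⁻¹' K = (fun x : G => x * b⁻¹) '' K := by
      ext x
      constructor
      · intro hx; exact ⟨x * b, hx, by simp [mul_assoc]⟩
      · rintro ⟨y, hy, rfl⟩; simpa [mul_assoc] using hy
    rw [h2]
    exact (hK.image (continuous_mul_right b⁻¹)).measure_lt_top
  have hpos : (μ.map (fun x => x * b)).IsOpenPosMeasure := by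
    refine ⟨fun U hU hUne => ?_⟩
    rw [Measure.map_apply hmb hU.measurableSet]
    obtain ⟨u, hu⟩ := hUne
    exact (hU.preimage (continuous_mul_right b)).measure_ne_zero μ
      ⟨u * b⁻¹, by simpa [mul_assoc] using hu⟩
  exact { toIsFiniteMeasureOnCompacts := hcpt, toIsMulLeftInvariant := hleft,
          toIsOpenPosMeasure := hpos }

-- core: composition with g ↦ a * g * b of an Lᵖ function supported on an open subgroup
lemma aux_memLp_comp
    {G : Type*} [Group G] [TopologicalSpace G] [IsTopologicalGroup G]
    [LocallyCompactSpace G] [T2Space G] [MeasurableSpace G] [BorelSpace G]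
    (μ : Measure G) [μ.IsHaarMeasure]
    (H : Subgroup G) (hH : IsOpen (H : Set G))
    (ψ : G → ℂ) (hψ : Measurable ψ) (hψ0 : ∀ x, x ∉ H → ψ x = 0)
    (hψc : ContinuousOn ψ (H : Set G))
    (r : ℝ) (hr : 0 < r)
    (hmem : MemLp ψ (ENNReal.ofReal r) (μ.restrict (H : Set G)))
    (a b : G) :
    MemLp (fun g => ψ (a * g * b)) (ENNReal.ofReal r) μ := by
  have hq0 : ENNReal.ofReal r ≠ 0 := by
    simp only [ne_eq, ENNReal.ofReal_eq_zero, not_le]; exact hr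
  have hqt : ENNReal.ofReal r ≠ ∞ := ENNReal.ofReal_ne_top
  have hqr : (ENNReal.ofReal r).toReal = r := ENNReal.toReal_ofReal hr.le
  -- ψ ∈ Lᵖ(μ)
  have hind : (H : Set G).indicator ψ = ψ := by
    funext x
    by_cases hx : x ∈ H
    · exact Set.indicator_of_mem hx ψ
    · rw [Set.indicator_of_notMem hx, hψ0 x hx]
  have hmemG : MemLp ψ (ENNReal.ofReal r) μ := by
    rw [← hind]
    exact (memLp_indicator_iff_restrict hH.measurableSet).2 hmem
  have hfin : ∫⁻ x, (‖ψ x‖₊ : ℝ≥0∞) ^ r ∂μ < ∞ := by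
    have := (eLpNorm_lt_top_iff_lintegral_rpow_enorm_lt_top hq0 hqt).1 hmemG.2
    rwa [hqr] at this
  -- the real-valued power function
  set φ : G → ℝ := fun x => ‖ψ x‖ ^ r with hφdef
  have hφ0 : ∀ x, 0 ≤ φ x := fun x => Real.rpow_nonneg (norm_nonneg _) r
  have hφm : Measurable φ := hψ.norm.pow measurable_const
  have hφopen : ∀ t : ℝ, 0 < t → IsOpen {x | t < φ x} := by
    intro t ht
    rw [isOpen_iff_mem_nhds]
    intro x hx
    have hxH : x ∈ (H : Set G) := by
      by_contra hxn
      have : φ x = 0 := by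
        simp only [hφdef, hψ0 x hxn, norm_zero]
        exact Real.zero_rpow (ne_of_gt hr)
      rw [Set.mem_setOf_eq, this] at hx
      linarith
    have hca : ContinuousAt φ x := by
      have h1 : ContinuousAt ψ x := hψc.continuousAt (hH.mem_nhds hxH)
      exact h1.norm.rpow_const (Or.inr hr.le)
    exact hca.preimage_mem_nhds (isOpen_Ioi.mem_nhds hx)
  -- relation between ennreal-power and ofReal ∘ φ
  have hofReal : ∀ x, ENNReal.ofReal (φ x) = (‖ψ x‖₊ : ℝ≥0∞) ^ r := by
    intro x
    rw [hφdef, ← ENNReal.ofReal_rpow_of_nonneg (norm_nonneg _) hr.le,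
      ofReal_norm, enorm_eq_nnnorm]
  -- the translated measure
  set ν : Measure G := μ.map (fun x => x * b) with hνdef
  haveI : ν.IsHaarMeasure := aux_isHaarMeasure_map_mul_right μ b
  have hcmp := aux_lintegral_haar_cmp ν μ φ hφm hφ0 hφopen
  -- finiteness of the composed integral
  have hmbb : Measurable (fun x : G => x * b) := measurable_mul_const b
  have key : ∫⁻ g, (‖ψ (a * g * b)‖₊ : ℝ≥0∞) ^ r ∂μ < ∞ := by
    have e1 : ∫⁻ g, (‖ψ (a * g * b)‖₊ : ℝ≥0∞) ^ r ∂μ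
        = ∫⁻ g, (‖ψ (g * b)‖₊ : ℝ≥0∞) ^ r ∂μ :=
      lintegral_mul_left_eq_self (fun g => (‖ψ (g * b)‖₊ : ℝ≥0∞) ^ r) a
    have e2 : ∫⁻ g, (‖ψ (g * b)‖₊ : ℝ≥0∞) ^ r ∂μ
        = ∫⁻ x, (‖ψ x‖₊ : ℝ≥0∞) ^ r ∂ν := by
      rw [hνdef, lintegral_map (by measurability) hmbb]
    have e3 : ∫⁻ x, (‖ψ x‖₊ : ℝ≥0∞) ^ r ∂ν
        = (Measure.haarScalarFactor ν μ : ℝ≥0∞) * ∫⁻ x, (‖ψ x‖₊ : ℝ≥0∞) ^ r ∂μ := by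
      simp_rw [← hofReal]
      exact hcmp
    rw [e1, e2, e3]
    exact ENNReal.mul_lt_top ENNReal.coe_lt_top hfin
  constructor
  · exact ((hψ.comp ((measurable_const_mul a).mul_const b)).aestronglyMeasurable)
  · rw [eLpNorm_lt_top_iff_lintegral_rpow_enorm_lt_top hq0 hqt, hqr]
    exact key


/-- The `L^{p+}` case of Proposition 1.2: if `H` is an open subgroup of a locally compact
group `G`, `π` a unitary representation of `H`, and `f, f'` are equivariant functions
supported on finitely many cosets whose component matrix coefficients
`h ↦ ⟨π(h) f(t), f'(t')⟩` lie in `L^{p+ε}(H)` for every `ε > 0`, then the matrix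
coefficient `g ↦ ∑_{t ∈ T} ⟨f(g⁻¹ t), f'(t)⟩` of the induced representation lies in
`L^{p+ε}(G)` for every `ε > 0`. -/
theorem induced_representation_Lp_plus
    {G : Type*} [Group G] [TopologicalSpace G] [IsTopologicalGroup G]
    [LocallyCompactSpace G] [T2Space G] [MeasurableSpace G] [BorelSpace G]
    (μ : Measure G) [μ.IsHaarMeasure]
    (H : Subgroup G) (hH : IsOpen (H : Set G))
    (T : Set G) (hT : ∀ g : G, ∃! t : G, t ∈ T ∧ t⁻¹ * g ∈ H)
    {V : Type*} [NormedAddCommGroup V] [InnerProductSpace ℂ V] [CompleteSpace V]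
    (π : ↥H →* (V ≃ₗᵢ[ℂ] V))
    (hπcont : ∀ v : V, Continuous fun h : ↥H => π h v)
    (p : ℝ) (hp : 1 ≤ p)
    (f f' : G → V)
    (hfequiv : ∀ g : G, ∀ h : ↥H, f (g * h) = π h⁻¹ (f g))
    (hf'equiv : ∀ g : G, ∀ h : ↥H, f' (g * h) = π h⁻¹ (f' g))
    (hfsupp : {t : T | f t ≠ 0}.Finite)
    (hf'supp : {t : T | f' t ≠ 0}.Finite)
    (hLp : ∀ t ∈ T, ∀ t' ∈ T, ∀ ε : ℝ, 0 < ε →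
      MemLp (fun g : G => if hg : g ∈ H then (inner ℂ ((π ⟨g, hg⟩) (f t)) (f' t') : ℂ) else 0)
        (ENNReal.ofReal (p + ε)) (μ.restrict (H : Set G))) :
    ∀ ε : ℝ, 0 < ε →
      MemLp (fun g : G => ∑' t : T, (inner ℂ (f (g⁻¹ * t)) (f' t) : ℂ))
        (ENNReal.ofReal (p + ε)) μ := by
  intro ε hε
  have hr : (0 : ℝ) < p + ε := by linarith
  set Ψ : T → T → G → ℂ := fun s t' x =>
    if hx : x ∈ (H : Set G) then (inner ℂ ((π ⟨x, hx⟩) (f s)) (f' t') : ℂ) else 0 with hΨ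
  set S : Finset T := hfsupp.toFinset with hS
  set S' : Finset T := hf'supp.toFinset with hS'
  -- each translated component is in L^{p+ε}
  have hmain : ∀ s t' : T,
      MemLp (fun g : G => Ψ s t' ((t' : G)⁻¹ * g * (s : G))) (ENNReal.ofReal (p + ε)) μ := by
    intro s t'
    have hc : Continuous fun h : ↥H => (inner ℂ ((π h) (f s)) (f' t')  : ℂ) :=
      Continuous.inner (hπcont (f s)) continuous_const
    haveI : OpensMeasurableSpace ↥H := Subtype.opensMeasurableSpace (H : Set G)
    have hmeas : Measurable (Ψ s t') := by
      exact Measurable.dite (s := (H : Set G)) hc.measurable measurable_const hH.measurableSet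
    have hzero : ∀ x, x ∉ H → Ψ s t' x = 0 := fun x hx => dif_neg hx
    have hcontOn : ContinuousOn (Ψ s t') (H : Set G) := by
      rw [continuousOn_iff_continuous_restrict]
      have he : (H : Set G).restrict (Ψ s t')
          = fun h : ↥(H : Set G) => (inner ℂ ((π ⟨h.1, h.2⟩) (f s)) (f' t') : ℂ) := by
        funext h
        exact dif_pos h.2
      rw [show (H : Set G).domRestrict (Ψ s t') = (H : Set G).restrict (Ψ s t') from rfl, he]
      exact hc
    have hmem : MemLp (Ψ s t') (ENNReal.ofReal (p + ε)) (μ.restrict (H : Set G)) :=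
      hLp s s.2 t' t'.2 ε hε
    exact aux_memLp_comp μ H hH (Ψ s t') hmeas hzero hcontOn (p + ε) hr hmem _ _
  -- pointwise identity
  have key : (fun g : G => ∑' t : T, (inner ℂ (f (g⁻¹ * t)) (f' t) : ℂ))
      = fun g : G => ∑ t' ∈ S', ∑ s ∈ S, Ψ s t' ((t' : G)⁻¹ * g * (s : G)) := by
    funext g
    have h0 : ∀ t : T, t ∉ S' → (inner ℂ (f (g⁻¹ * t)) (f' t) : ℂ) = 0 := by
      intro t ht
      have hf't : f' ↑t = 0 := by
        by_contra hne
        exact ht (hf'supp.mem_toFinset.2 hne)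
      rw [hf't, inner_zero_right]
    rw [tsum_eq_sum h0]
    refine Finset.sum_congr rfl fun t' _ => ?_
    obtain ⟨s₀, ⟨hs₀T, hs₀H⟩, huniq⟩ := hT (g⁻¹ * ↑t')
    have huniq' : ∀ u : T, (t' : G)⁻¹ * g * (u : G) ∈ H → (u : G) = s₀ := by
      intro u hu
      refine huniq ↑u ⟨u.2, ?_⟩
      have he : ((u : G))⁻¹ * (g⁻¹ * ↑t') = ((t' : G)⁻¹ * g * (u : G))⁻¹ := by group
      rw [he]
      exact inv_mem hu
    have hfval : f (g⁻¹ * ↑t') = π (⟨s₀⁻¹ * (g⁻¹ * ↑t'), hs₀H⟩ : ↥H)⁻¹ (f s₀) := by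
      conv_lhs => rw [show g⁻¹ * (t' : G)
        = s₀ * ((⟨s₀⁻¹ * (g⁻¹ * ↑t'), hs₀H⟩ : ↥H) : G) from (mul_inv_cancel_left s₀ _).symm]
      exact hfequiv s₀ _
    by_cases hs₀0 : f s₀ = 0
    · rw [hfval, hs₀0, map_zero, inner_zero_left]
      symm
      refine Finset.sum_eq_zero fun u hu => ?_
      by_cases huH : (t' : G)⁻¹ * g * (u : G) ∈ H
      · exfalso
        have hfu : f ↑u ≠ 0 := hfsupp.mem_toFinset.1 hu
        rw [huniq' u huH] at hfu
        exact hfu hs₀0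
      · exact dif_neg huH
    · have hs₀S : (⟨s₀, hs₀T⟩ : T) ∈ S := hfsupp.mem_toFinset.2 hs₀0
      rw [Finset.sum_eq_single_of_mem (⟨s₀, hs₀T⟩ : T) hs₀S ?side]
      case side =>
        intro u hu hne
        by_cases huH : (t' : G)⁻¹ * g * (u : G) ∈ H
        · exact absurd (Subtype.ext (huniq' u huH)) hne
        · exact dif_neg huH
      have hmemH₀ : (t' : G)⁻¹ * g * s₀ ∈ H := by
        have he : (t' : G)⁻¹ * g * s₀ = (s₀⁻¹ * (g⁻¹ * ↑t'))⁻¹ := by group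
        rw [he]
        exact inv_mem hs₀H
      have harg : (⟨s₀⁻¹ * (g⁻¹ * ↑t'), hs₀H⟩ : ↥H)⁻¹
          = (⟨(t' : G)⁻¹ * g * s₀, hmemH₀⟩ : ↥H) := by
        apply Subtype.ext
        simp only [InvMemClass.coe_inv]
        group
      show (inner ℂ (f (g⁻¹ * ↑t')) (f' ↑t') : ℂ)
          = if hx : (t' : G)⁻¹ * g * s₀ ∈ (H : Set G) then
              (inner ℂ ((π ⟨(t' : G)⁻¹ * g * s₀, hx⟩) (f s₀)) (f' ↑t') : ℂ) else 0
      have hmemH₀' : (t' : G)⁻¹ * g * s₀ ∈ (H : Set G) := hmemH₀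
      rw [dif_pos hmemH₀', hfval, harg]
  rw [key]
  refine memLp_finset_sum S' fun t' _ => ?_
  exact memLp_finset_sum S fun s _ => hmain s t'
end
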